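/- Suppose μ₁ and μ₂ are finite nonnegative Borel measures on the space C* of continuous functions f : 𝕊 → [0,1] not identically 0 or 1, such that for every n, m ≥ 1 and all points x₁,…,xₙ, y₁,…,y_m in 𝕊 one has ∫ (∏ᵢ(1−f(xᵢ)))·(1 − ∏ⱼ(1−f(yⱼ))) dμ₁(f) = ∫ (∏ᵢ(1−f(xᵢ)))·(1 − ∏ⱼ(1−f(yⱼ))) dμ₂(f). Then μ₁ = μ₂. -/

import Mathlib

open MeasureTheory

/-- The state space `C* = C(𝕊;[0,1]) \ {0̄, 1̄}`: continuous functions from the circle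
`𝕊 = ℝ/ℤ` to `[0,1]` taking a value strictly between `0` and `1` somewhere, equipped
with the (uniform = compact-open) topology and its Borel σ-algebra. -/
def Cstar : Type :=
  {f : C(AddCircle (1:ℝ), ℝ) // (∀ x, f x ∈ Set.Icc (0:ℝ) 1) ∧ ∃ x, f x ∈ Set.Ioo (0:ℝ) 1}

noncomputable instance : TopologicalSpace Cstar :=
  inferInstanceAs (TopologicalSpace
    {f : C(AddCircle (1:ℝ), ℝ) // (∀ x, f x ∈ Set.Icc (0:ℝ) 1) ∧ ∃ x, f x ∈ Set.Ioo (0:ℝ) 1})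

noncomputable instance : MeasurableSpace Cstar := borel Cstar

open Topology Filter Set

noncomputable section

local notation "𝕊" => AddCircle (1:ℝ)

namespace CstarAux

instance : BorelSpace Cstar := ⟨rfl⟩

instance instMS : MetricSpace Cstar :=
  inferInstanceAs (MetricSpace
    {f : C(𝕊, ℝ) // (∀ x, f x ∈ Set.Icc (0:ℝ) 1) ∧ ∃ x, f x ∈ Set.Ioo (0:ℝ) 1})

instance : SecondCountableTopology Cstar :=
  inferInstanceAs (SecondCountableTopology
    {f : C(𝕊, ℝ) // (∀ x, f x ∈ Set.Icc (0:ℝ) 1) ∧ ∃ x, f x ∈ Set.Ioo (0:ℝ) 1})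

instance : Nonempty Cstar := by
  refine ⟨⟨ContinuousMap.const _ (1/2), fun x => ?_, ⟨0, ?_⟩⟩⟩ <;>
    simp <;> norm_num

lemma continuous_ev (x : 𝕊) : Continuous (fun f : Cstar => f.1 x) :=
  (continuous_eval_const x).comp continuous_subtype_val

lemma measurable_ev (x : 𝕊) : Measurable (fun f : Cstar => f.1 x) :=
  (continuous_ev x).measurable

lemma ev_mem (f : Cstar) (x : 𝕊) : f.1 x ∈ Set.Icc (0:ℝ) 1 := f.2.1 x

/-- a dense sequence in the circle, each value repeated infinitely often -/
def v : ℕ → 𝕊 := fun n => TopologicalSpace.denseSeq 𝕊 (Nat.unpair n).1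

lemma exists_v_mem_infinite {U : Set 𝕊} (hU : IsOpen U) (hne : U.Nonempty) :
    {n : ℕ | v n ∈ U}.Infinite := by
  obtain ⟨a, ha⟩ := (TopologicalSpace.denseRange_denseSeq 𝕊).exists_mem_open hU hne
  refine Set.infinite_of_injective_forall_mem (f := fun b : ℕ => Nat.pair a b) ?_ ?_
  · intro b b' hb
    simpa [Nat.pair_eq_pair] using hb
  · intro b
    simpa [v, Nat.unpair_pair] using ha

lemma aux_prod_tendsto (a : ℕ → ℝ) (ha0 : ∀ j, 0 ≤ a j) (ha1 : ∀ j, a j ≤ 1)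
    {S : Set ℕ} (hS : S.Infinite) {δ : ℝ} (hδ0 : 0 < δ) (hδ1 : δ < 1)
    (hSa : ∀ j ∈ S, a j ≤ δ) :
    Tendsto (fun m => ∏ j ∈ Finset.range m, a j) atTop (𝓝 0) := by
  rw [Metric.tendsto_atTop]
  intro ε hε
  obtain ⟨k, hk⟩ := exists_pow_lt_of_lt_one hε hδ1
  obtain ⟨t, htS, htk⟩ := hS.exists_subset_card_eq k
  refine ⟨t.sup id + 1, fun m hmt => ?_⟩
  have htm : t ⊆ Finset.range m := fun j hj =>
    Finset.mem_range.2 (lt_of_lt_of_le (Nat.lt_succ_of_le (Finset.le_sup (f := id) hj)) hmt)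
  have hsd := Finset.prod_sdiff (f := a) htm
  have h2 : ∏ j ∈ t, a j ≤ δ ^ k := by
    rw [← htk, ← Finset.prod_const]
    exact Finset.prod_le_prod (fun i _ => ha0 i) (fun i hi => hSa i (htS hi))
  have h2' : 0 ≤ ∏ j ∈ t, a j := Finset.prod_nonneg fun i _ => ha0 i
  have h3 : ∏ j ∈ Finset.range m \ t, a j ≤ 1 :=
    Finset.prod_le_one (fun i _ => ha0 i) (fun i _ => ha1 i)
  have h3' : 0 ≤ ∏ j ∈ Finset.range m \ t, a j := Finset.prod_nonneg fun i _ => ha0 i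
  have h1 : ∏ j ∈ Finset.range m, a j ≤ ∏ j ∈ t, a j := by
    rw [← hsd]
    nlinarith
  have h0 : 0 ≤ ∏ j ∈ Finset.range m, a j := Finset.prod_nonneg fun i _ => ha0 i
  rw [Real.dist_eq, sub_zero, abs_of_nonneg h0]
  calc ∏ j ∈ Finset.range m, a j ≤ δ ^ k := le_trans h1 h2
    _ < ε := hk

/-- the basic product tends to zero on `C*` -/
lemma prod_tendsto (f : Cstar) :
    Tendsto (fun m => ∏ j ∈ Finset.range m, (1 - f.1 (v j))) atTop (𝓝 0) := by
  obtain ⟨x₀, hx₀⟩ := f.2.2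
  obtain ⟨hc0, hc1⟩ := hx₀
  set c : ℝ := f.1 x₀ with hc
  have hS : {n : ℕ | v n ∈ (f.1) ⁻¹' Set.Ioi (c/2)}.Infinite :=
    exists_v_mem_infinite (IsOpen.preimage f.1.continuous isOpen_Ioi)
      ⟨x₀, by simp [hc]; linarith⟩
  refine aux_prod_tendsto _ (fun j => by linarith [(f.2.1 (v j)).2])
    (fun j => by linarith [(f.2.1 (v j)).1]) hS (δ := 1 - c/2)
    (by linarith) (by linarith) ?_
  intro j hj
  have : c/2 < f.1 (v j) := hj
  linarith

/-- the unit interval as a type -/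
abbrev I01 : Type := Set.Icc (0:ℝ) 1

/-- finite-dimensional compact cube -/
abbrev Xn (n : ℕ) : Type := Fin n → I01

def corner (n : ℕ) : Xn n := fun _ => ⟨1, by norm_num⟩

/-- evaluation at a tuple of circle points -/
def T {n : ℕ} (w : Fin n → 𝕊) (f : Cstar) : Xn n := fun i => ⟨f.1 (w i), f.2.1 _⟩

lemma continuous_T {n : ℕ} (w : Fin n → 𝕊) : Continuous (T w) :=
  continuous_pi fun i => Continuous.subtype_mk (continuous_ev (w i)) _

lemma measurable_T {n : ℕ} (w : Fin n → 𝕊) : Measurable (T w) :=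
  (continuous_T w).measurable

/-- coordinate function as a continuous map -/
def coordFn {n : ℕ} (i : Fin n) : C(Xn n, ℝ) :=
  ⟨fun z => (z i : ℝ), continuous_subtype_val.comp (continuous_apply i)⟩

def uFn {n : ℕ} (i : Fin n) : C(Xn n, ℝ) := 1 - coordFn i

section Measures

variable (μ₁ μ₂ : Measure Cstar) [IsFiniteMeasure μ₁] [IsFiniteMeasure μ₂]

/-- integrability of bounded measurable functions -/
lemma integrable_of_bdd {g : Cstar → ℝ} (hg : Continuous g) {C : ℝ}
    (hb : ∀ f, |g f| ≤ C) : Integrable g μ₁ :=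
  ⟨hg.aestronglyMeasurable, HasFiniteIntegral.of_bounded (C := C)
    (Filter.Eventually.of_forall fun f => by simpa [Real.norm_eq_abs] using hb f)⟩

/-- Step 1: all moments of `1 - f` agree. -/
lemma moments
    (h : ∀ (n m : ℕ), 0 < n → 0 < m →
      ∀ (x : Fin n → 𝕊) (y : Fin m → 𝕊),
      (∫ f : Cstar, (∏ i, (1 - f.1 (x i))) * (1 - ∏ j, (1 - f.1 (y j))) ∂μ₁)
        = ∫ f : Cstar, (∏ i, (1 - f.1 (x i))) * (1 - ∏ j, (1 - f.1 (y j))) ∂μ₂)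
    {k : ℕ} (hk : 0 < k) (x : Fin k → 𝕊) :
    ∫ f : Cstar, ∏ j, (1 - f.1 (x j)) ∂μ₁ = ∫ f : Cstar, ∏ j, (1 - f.1 (x j)) ∂μ₂ := by
  set P : Cstar → ℝ := fun f => ∏ j, (1 - f.1 (x j)) with hP
  have hPcont : Continuous P :=
    continuous_finset_prod _ fun j _ => continuous_const.sub (continuous_ev (x j))
  have hPmem : ∀ f : Cstar, P f ∈ Set.Icc (0:ℝ) 1 := fun f =>
    ⟨Finset.prod_nonneg fun j _ => by linarith [(f.2.1 (x j)).2],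
     Finset.prod_le_one (fun j _ => by linarith [(f.2.1 (x j)).2])
       (fun j _ => by linarith [(f.2.1 (x j)).1])⟩
  set G : ℕ → Cstar → ℝ := fun m f => ∏ j ∈ Finset.range m, (1 - f.1 (v j)) with hG
  have hGcont : ∀ m, Continuous (G m) := fun m =>
    continuous_finset_prod _ fun j _ => continuous_const.sub (continuous_ev (v j))
  have hGmem : ∀ m (f : Cstar), G m f ∈ Set.Icc (0:ℝ) 1 := fun m f =>
    ⟨Finset.prod_nonneg fun j _ => by linarith [(f.2.1 (v j)).2],
     Finset.prod_le_one (fun j _ => by linarith [(f.2.1 (v j)).2])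
       (fun j _ => by linarith [(f.2.1 (v j)).1])⟩
  have key : ∀ (μ : Measure Cstar) [IsFiniteMeasure μ],
      Tendsto (fun m => ∫ f, P f * (1 - G m f) ∂μ) atTop (𝓝 (∫ f, P f ∂μ)) := by
    intro μ _
    refine tendsto_integral_of_dominated_convergence (bound := fun _ => (1:ℝ))
      (fun m => ((hPcont.mul (continuous_const.sub (hGcont m))).aestronglyMeasurable))
      (integrable_const 1) (fun m => Filter.Eventually.of_forall fun f => ?_)
      (Filter.Eventually.of_forall fun f => ?_)
    · rw [Real.norm_eq_abs, abs_mul]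
      have h1 := hPmem f; have h2 := hGmem m f
      have ha : |P f| ≤ 1 := abs_le.2 ⟨by linarith [h1.1], h1.2⟩
      have hb : |1 - G m f| ≤ 1 := abs_le.2 ⟨by linarith [h2.2], by linarith [h2.1]⟩
      exact mul_le_one₀ ha (abs_nonneg _) hb
    · have := prod_tendsto f
      have : Tendsto (fun m => P f * (1 - G m f)) atTop (𝓝 (P f * (1 - 0))) :=
        tendsto_const_nhds.mul (tendsto_const_nhds.sub this)
      simpa using this
  have h12 : (fun m => ∫ f, P f * (1 - G m f) ∂μ₁)
      =ᶠ[atTop] (fun m => ∫ f, P f * (1 - G m f) ∂μ₂) := by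
    filter_upwards [eventually_ge_atTop 1] with m hm1
    have hx := h k m hk (by omega) x (fun j : Fin m => v (j : ℕ))
    have hrw : ∀ f : Cstar, (∏ j : Fin m, (1 - f.1 (v (j : ℕ)))) = G m f := fun f =>
      Fin.prod_univ_eq_prod_range (fun j => 1 - f.1 (v j)) m
    simpa only [hrw] using hx
  exact tendsto_nhds_unique ((key μ₁).congr' h12) (key μ₂)

/-- Step 2: the key identity for all continuous test functions on the cube. -/
lemma D_eq
    (hm : ∀ {k : ℕ}, 0 < k → ∀ x : Fin k → 𝕊,
      ∫ f : Cstar, ∏ j, (1 - f.1 (x j)) ∂μ₁ = ∫ f : Cstar, ∏ j, (1 - f.1 (x j)) ∂μ₂)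
    {n : ℕ} (w : Fin n → 𝕊) (φ : C(Xn n, ℝ)) :
    (∫ f, φ (T w f) ∂μ₁) - (∫ f, φ (T w f) ∂μ₂)
      = ((∫ _ : Cstar, (1:ℝ) ∂μ₁) - ∫ _ : Cstar, (1:ℝ) ∂μ₂) * φ (corner n) := by
  classical
  set D : C(Xn n, ℝ) → ℝ :=
    fun ψ => (∫ f, ψ (T w f) ∂μ₁) - ∫ f, ψ (T w f) ∂μ₂ with hD
  have hint : ∀ (ψ : C(Xn n, ℝ)) (μ : Measure Cstar) [IsFiniteMeasure μ],
      Integrable (fun f => ψ (T w f)) μ := by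
    intro ψ μ _
    refine integrable_of_bdd μ (ψ.continuous.comp (continuous_T w)) (C := ‖ψ‖) fun f => ?_
    simpa [Real.norm_eq_abs] using ψ.norm_coe_le_norm (T w f)
  have hDone : D 1 = (∫ _ : Cstar, (1:ℝ) ∂μ₁) - ∫ _ : Cstar, (1:ℝ) ∂μ₂ := by
    simp [hD]
  -- D is Lipschitz, hence continuous
  have hDlip : ∀ ψ χ : C(Xn n, ℝ), dist (D ψ) (D χ)
      ≤ ((μ₁ Set.univ).toReal + (μ₂ Set.univ).toReal) * dist ψ χ := by
    intro ψ χ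
    have hsub : ∀ (μ : Measure Cstar) [IsFiniteMeasure μ],
        (∫ f, ψ (T w f) ∂μ) - ∫ f, χ (T w f) ∂μ = ∫ f, (ψ - χ) (T w f) ∂μ := by
      intro μ _
      rw [← integral_sub (hint ψ μ) (hint χ μ)]
      simp
    have hb : ∀ (μ : Measure Cstar) [IsFiniteMeasure μ],
        |∫ f, (ψ - χ) (T w f) ∂μ| ≤ ‖ψ - χ‖ * (μ Set.univ).toReal := by
      intro μ _
      rw [← Real.norm_eq_abs]
      exact norm_integral_le_of_norm_le_const
        (Filter.Eventually.of_forall fun f => (ψ - χ).norm_coe_le_norm (T w f))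
    have h1 := hb μ₁; have h2 := hb μ₂
    rw [Real.dist_eq, dist_eq_norm]
    have : D ψ - D χ = (∫ f, (ψ - χ) (T w f) ∂μ₁) - ∫ f, (ψ - χ) (T w f) ∂μ₂ := by
      rw [← hsub μ₁, ← hsub μ₂, hD]; ring
    rw [this]
    calc |(∫ f, (ψ - χ) (T w f) ∂μ₁) - ∫ f, (ψ - χ) (T w f) ∂μ₂|
        ≤ |∫ f, (ψ - χ) (T w f) ∂μ₁| + |∫ f, (ψ - χ) (T w f) ∂μ₂| := abs_sub _ _
      _ ≤ ‖ψ - χ‖ * (μ₁ Set.univ).toReal + ‖ψ - χ‖ * (μ₂ Set.univ).toReal := add_le_add h1 h2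
      _ = ((μ₁ Set.univ).toReal + (μ₂ Set.univ).toReal) * ‖ψ - χ‖ := by ring
  have hDcont : Continuous D := by
    refine (LipschitzWith.of_dist_le_mul (K := ((μ₁ Set.univ).toReal
      + (μ₂ Set.univ).toReal).toNNReal) (f := D) fun ψ χ => ?_).continuous
    refine le_trans (hDlip ψ χ) ?_
    gcongr
    exact le_of_eq (Real.coe_toNNReal _ (by positivity)).symm
  -- the closed subspace where the identity holds
  set Wc : Set C(Xn n, ℝ) := {ψ | D ψ = D 1 * ψ (corner n)} with hWc
  have hWclosed : IsClosed Wc := isClosed_eq hDcont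
    (continuous_const.mul (continuous_eval_const (corner n)))
  let Wsub : Submodule ℝ C(Xn n, ℝ) :=
    { carrier := Wc
      add_mem' := by
        intro ψ χ hψ hχ
        have : D (ψ + χ) = D ψ + D χ := by
          simp only [hD, ContinuousMap.add_apply]
          rw [integral_add (hint ψ μ₁) (hint χ μ₁), integral_add (hint ψ μ₂) (hint χ μ₂)]
          ring
        simp only [hWc, Set.mem_setOf_eq] at *
        rw [this, hψ, hχ, ContinuousMap.add_apply]; ring
      zero_mem' := by
        simp only [hWc, Set.mem_setOf_eq, hD]
        simp
      smul_mem' := by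
        intro c ψ hψ
        have : D (c • ψ) = c * D ψ := by
          simp only [hD, ContinuousMap.smul_apply, smul_eq_mul]
          rw [integral_const_mul, integral_const_mul]; ring
        simp only [hWc, Set.mem_setOf_eq] at *
        rw [this, hψ, ContinuousMap.smul_apply]; simp; ring }
  -- monomials in the functions uFn belong to Wc
  have humem : (Submonoid.closure (Set.range (uFn (n := n))) : Set C(Xn n, ℝ)) ⊆ Wc := by
    intro ψ hψ
    obtain ⟨l, hl, rfl⟩ := Submonoid.exists_list_of_mem_closure hψ
    rcases Nat.eq_zero_or_pos l.length with hlen | hlen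
    · rw [List.eq_nil_of_length_eq_zero hlen]
      simp only [List.prod_nil, hWc, Set.mem_setOf_eq, ContinuousMap.one_apply, mul_one]
    · have hg : ∀ j : Fin l.length, ∃ i : Fin n, uFn i = l.get j := fun j =>
        hl _ (List.get_mem l j)
      choose g hgspec using hg
      have hprod : l.prod = ∏ j : Fin l.length, uFn (g j) := by
        conv_lhs => rw [← List.ofFn_get l]
        rw [List.prod_ofFn]
        exact Finset.prod_congr rfl fun j _ => (hgspec j).symm
      have hcorner : (l.prod) (corner n) = 0 := by
        rw [hprod, ContinuousMap.prod_apply]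
        refine Finset.prod_eq_zero (Finset.mem_univ (⟨0, hlen⟩ : Fin l.length)) ?_
        simp [uFn, coordFn, corner]
      have hTval : ∀ f : Cstar, (l.prod) (T w f) = ∏ j, (1 - f.1 ((w ∘ g) j)) := by
        intro f
        rw [hprod, ContinuousMap.prod_apply]
        exact Finset.prod_congr rfl fun j _ => by simp [uFn, coordFn, T]
      have hDzero : D l.prod = 0 := by
        rw [hD]
        simp only [hTval]
        rw [hm hlen (w ∘ g)]
        ring
      simp only [hWc, Set.mem_setOf_eq, hDzero, hcorner, mul_zero]
  -- the algebra generated by the uFn's is contained in Wc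
  have hadj : (Algebra.adjoin ℝ (Set.range (uFn (n := n))) : Set C(Xn n, ℝ)) ⊆ Wc := by
    intro ψ hψ
    have : ψ ∈ Submodule.span ℝ (Submonoid.closure (Set.range (uFn (n := n))) : Set C(Xn n, ℝ)) := by
      rw [← Algebra.adjoin_eq_span]; exact hψ
    exact Submodule.span_le (p := Wsub).2 humem this
  -- Stone-Weierstrass
  have hsep : (Algebra.adjoin ℝ (Set.range (uFn (n := n)))).SeparatesPoints := by
    intro z z' hzz
    obtain ⟨i, hi⟩ := Function.ne_iff.1 hzz
    refine ⟨uFn i, ⟨uFn i, Algebra.subset_adjoin (Set.mem_range_self i), rfl⟩, ?_⟩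
    have : (z i : ℝ) ≠ (z' i : ℝ) := fun hc => hi (Subtype.coe_injective hc)
    simpa [uFn, coordFn, sub_eq_sub_iff_sub_eq_sub] using fun hc => this (by linarith)
  have htop := ContinuousMap.subalgebra_topologicalClosure_eq_top_of_separatesPoints
    (Algebra.adjoin ℝ (Set.range (uFn (n := n)))) hsep
  have hφW : φ ∈ Wc := by
    have hφcl : φ ∈ closure (Algebra.adjoin ℝ (Set.range (uFn (n := n))) : Set C(Xn n, ℝ)) := by
      have : φ ∈ ((Algebra.adjoin ℝ (Set.range (uFn (n := n)))).topologicalClosure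
          : Set C(Xn n, ℝ)) := by rw [htop]; trivial
      exact this
    exact closure_minimal hadj hWclosed hφcl
  rw [← hDone]
  exact hφW

/-- Step 3: measures of preimages of closed sets avoiding the corner agree (≤ version). -/
lemma push_le
    (hm : ∀ {k : ℕ}, 0 < k → ∀ x : Fin k → 𝕊,
      ∫ f : Cstar, ∏ j, (1 - f.1 (x j)) ∂μ₁ = ∫ f : Cstar, ∏ j, (1 - f.1 (x j)) ∂μ₂)
    {n : ℕ} (w : Fin n → 𝕊) {F : Set (Xn n)} (hF : IsClosed F) (hc : corner n ∉ F) :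
    μ₁ (T w ⁻¹' F) ≤ μ₂ (T w ⁻¹' F) := by
  have hFm : MeasurableSet F := hF.measurableSet
  set ν₂ : Measure (Xn n) := Measure.map (T w) μ₂ with hν
  have hmap : ∀ S : Set (Xn n), MeasurableSet S → ν₂ S = μ₂ (T w ⁻¹' S) := fun S hS =>
    Measure.map_apply (measurable_T w) hS
  haveI : IsFiniteMeasure ν₂ := ⟨by
    rw [hν, Measure.map_apply (measurable_T w) MeasurableSet.univ]
    exact measure_lt_top _ _⟩
  refine ENNReal.le_of_forall_pos_le_add fun ε hε _ => ?_
  have hνF : ν₂ F ≠ ⊤ := measure_ne_top _ _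
  have hlt : ν₂ F < ν₂ F + ε := ENNReal.lt_add_right hνF (by exact_mod_cast hε.ne')
  obtain ⟨U, hFU, hUopen, hUlt⟩ := Set.exists_isOpen_lt_of_lt F _ hlt
  set U' : Set (Xn n) := U ∩ {corner n}ᶜ with hU'
  have hU'open : IsOpen U' := hUopen.inter isClosed_singleton.isOpen_compl
  have hFU' : F ⊆ U' :=
    Set.subset_inter hFU (fun z hz hz1 => hc (Set.mem_singleton_iff.1 hz1 ▸ hz))
  have hcU' : (corner n) ∉ U' := fun hmem => hmem.2 rfl
  obtain ⟨φ, hφ0, hφ1, hφmem⟩ := exists_continuous_zero_one_of_isClosed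
    hU'open.isClosed_compl hF (Set.disjoint_left.2 fun z hz hzF => hz (hFU' hzF))
  have hφc : φ (corner n) = 0 := hφ0 hcU'
  have heq : ∫ f, φ (T w f) ∂μ₁ = ∫ f, φ (T w f) ∂μ₂ := by
    have key := D_eq μ₁ μ₂ hm w φ
    rw [hφc, mul_zero, sub_eq_zero] at key
    exact key
  have hφint : ∀ (μ : Measure Cstar) [IsFiniteMeasure μ],
      Integrable (fun f => φ (T w f)) μ := by
    intro μ _
    refine integrable_of_bdd μ (φ.continuous.comp (continuous_T w)) (C := ‖φ‖) fun f => ?_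
    simpa [Real.norm_eq_abs] using φ.norm_coe_le_norm (T w f)
  have hTF : MeasurableSet (T w ⁻¹' F) := measurable_T w hFm
  have hTU' : MeasurableSet (T w ⁻¹' U') := measurable_T w hU'open.measurableSet
  have hind1 : (μ₁ (T w ⁻¹' F)).toReal ≤ ∫ f, φ (T w f) ∂μ₁ := by
    change μ₁.real (T w ⁻¹' F) ≤ _
    rw [← integral_indicator_one hTF]
    refine integral_mono ((integrable_indicator_iff hTF).2
      (integrableOn_const (measure_ne_top _ _))) (hφint μ₁) fun f => ?_
    by_cases hf : f ∈ T w ⁻¹' F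
    · rw [Set.indicator_of_mem hf, Pi.one_apply, hφ1 hf]; simp
    · rw [Set.indicator_of_notMem hf]
      exact (hφmem (T w f)).1
  have hind2 : ∫ f, φ (T w f) ∂μ₂ ≤ (μ₂ (T w ⁻¹' U')).toReal := by
    change _ ≤ μ₂.real (T w ⁻¹' U')
    rw [← integral_indicator_one hTU']
    refine integral_mono (hφint μ₂) ((integrable_indicator_iff hTU').2
      (integrableOn_const (measure_ne_top _ _))) fun f => ?_
    by_cases hf : f ∈ T w ⁻¹' U'
    · rw [Set.indicator_of_mem hf, Pi.one_apply]
      exact (hφmem (T w f)).2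
    · rw [Set.indicator_of_notMem hf]
      have : T w f ∈ U'ᶜ := hf
      rw [hφ0 this]; simp
  have hreal : (μ₁ (T w ⁻¹' F)).toReal ≤ (μ₂ (T w ⁻¹' U')).toReal := by
    calc (μ₁ (T w ⁻¹' F)).toReal ≤ ∫ f, φ (T w f) ∂μ₁ := hind1
      _ = ∫ f, φ (T w f) ∂μ₂ := heq
      _ ≤ (μ₂ (T w ⁻¹' U')).toReal := hind2
  have hEN : μ₁ (T w ⁻¹' F) ≤ μ₂ (T w ⁻¹' U') :=
    (ENNReal.toReal_le_toReal (measure_ne_top _ _) (measure_ne_top _ _)).1 hreal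
  calc μ₁ (T w ⁻¹' F) ≤ μ₂ (T w ⁻¹' U') := hEN
    _ = ν₂ U' := (hmap U' hU'open.measurableSet).symm
    _ ≤ ν₂ U := measure_mono Set.inter_subset_left
    _ ≤ ν₂ F + ε := le_of_lt hUlt
    _ = μ₂ (T w ⁻¹' F) + ε := by rw [hmap F hFm]

lemma push_eq
    (hm : ∀ {k : ℕ}, 0 < k → ∀ x : Fin k → 𝕊,
      ∫ f : Cstar, ∏ j, (1 - f.1 (x j)) ∂μ₁ = ∫ f : Cstar, ∏ j, (1 - f.1 (x j)) ∂μ₂)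
    {n : ℕ} (w : Fin n → 𝕊) {F : Set (Xn n)} (hF : IsClosed F) (hc : corner n ∉ F) :
    μ₁ (T w ⁻¹' F) = μ₂ (T w ⁻¹' F) :=
  le_antisymm (push_le μ₁ μ₂ hm w hF hc)
    (push_le μ₂ μ₁ (fun hk x => (hm hk x).symm) w hF hc)

end Measures

/-- the π-system of closed cylinders avoiding the corner -/
def cylSets : Set (Set Cstar) :=
  {s | ∃ (n : ℕ) (w : Fin n → 𝕊) (c : Fin n → ℝ), (∃ i, c i < 1) ∧
    s = {f : Cstar | ∀ i, f.1 (w i) ≤ c i}}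

lemma isPiSystem_cylSets : IsPiSystem cylSets := by
  rintro s ⟨n, w, c, ⟨i₀, hi₀⟩, rfl⟩ t ⟨n', w', c', ⟨i₁, hi₁⟩, rfl⟩ -
  refine ⟨n + n', Fin.append w w', Fin.append c c',
    ⟨Fin.castAdd n' i₀, by rwa [Fin.append_left]⟩, ?_⟩
  ext f
  simp only [Set.mem_inter_iff, Set.mem_setOf_eq]
  constructor
  · rintro ⟨h1, h2⟩ i
    refine Fin.addCases (fun j => ?_) (fun j => ?_) i
    · rw [Fin.append_left, Fin.append_left]; exact h1 j
    · rw [Fin.append_right, Fin.append_right]; exact h2 j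
  · intro hall
    constructor
    · intro j
      have := hall (Fin.castAdd n' j)
      rwa [Fin.append_left, Fin.append_left] at this
    · intro j
      have := hall (Fin.natAdd n j)
      rwa [Fin.append_right, Fin.append_right] at this

lemma borel_eq_generateFrom_cylSets :
    (inferInstance : MeasurableSpace Cstar) = MeasurableSpace.generateFrom cylSets := by
  haveI hOM : OpensMeasurableSpace Cstar := ⟨le_of_eq rfl⟩
  set E := MeasurableSpace.generateFrom cylSets with hE
  -- evaluation preimages of Iic are in E
  have hIic : ∀ (x : 𝕊) (c : ℝ), MeasurableSet[E] {f : Cstar | f.1 x ≤ c} := by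
    intro x c
    rcases lt_or_ge c 1 with hc | hc
    · apply MeasurableSpace.measurableSet_generateFrom
      refine ⟨1, fun _ => x, fun _ => c, ⟨0, hc⟩, ?_⟩
      ext f
      simp [Fin.forall_fin_one]
    · have : {f : Cstar | f.1 x ≤ c} = Set.univ := by
        ext f
        simp only [Set.mem_setOf_eq, Set.mem_univ, iff_true]
        exact le_trans (f.2.1 x).2 hc
      rw [this]
      exact MeasurableSet.univ
  have hev : ∀ x : 𝕊, Measurable[E] (fun f : Cstar => f.1 x) := by
    intro x
    rw [measurable_iff_comap_le, show (Real.measurableSpace : MeasurableSpace ℝ) = borel ℝ from rfl,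
      borel_eq_generateFrom_Iic ℝ, MeasurableSpace.comap_generateFrom]
    refine MeasurableSpace.generateFrom_le ?_
    rintro t ⟨t', ⟨c, rfl⟩, rfl⟩
    exact hIic x c
  -- closed balls are in E
  have hball : ∀ (f : Cstar) (q : ℝ), 0 ≤ q → MeasurableSet[E] (Metric.closedBall f q) := by
    intro f q hq
    have hrep : Metric.closedBall f q = ⋂ a : ℕ,
        (fun g : Cstar => g.1 (TopologicalSpace.denseSeq 𝕊 a)) ⁻¹'
          Metric.closedBall (f.1 (TopologicalSpace.denseSeq 𝕊 a)) q := by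
      ext g
      simp only [Metric.mem_closedBall, Set.mem_iInter, Set.mem_preimage]
      change dist g.1 f.1 ≤ q ↔ _
      rw [ContinuousMap.dist_le hq]
      constructor
      · intro hall a
        exact hall _
      · intro ha x
        have hclosed : IsClosed {y : 𝕊 | dist (g.1 y) (f.1 y) ≤ q} :=
          isClosed_le (Continuous.dist g.1.continuous f.1.continuous) continuous_const
        have hsub : Set.range (TopologicalSpace.denseSeq 𝕊)
            ⊆ {y : 𝕊 | dist (g.1 y) (f.1 y) ≤ q} := by
          rintro y ⟨a, rfl⟩
          exact ha a
        exact hclosed.closure_subset_iff.2 hsub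
          ((TopologicalSpace.denseRange_denseSeq 𝕊) x)
    rw [hrep]
    exact MeasurableSet.iInter fun a => hev _ measurableSet_closedBall
  refine le_antisymm ?_ ?_
  · -- borel ≤ E : every open set is a countable union of closed balls
    show borel Cstar ≤ E
    refine MeasurableSpace.generateFrom_le fun U hU => ?_
    have hUopen : IsOpen U := hU
    set sq := TopologicalSpace.denseSeq Cstar with hsq
    have hrep : U = ⋃ p : {p : ℕ × ℚ // 0 < p.2 ∧ Metric.closedBall (sq p.1) (p.2 : ℝ) ⊆ U},
        Metric.closedBall (sq p.1.1) ((p.1.2 : ℝ)) := by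
      apply Set.Subset.antisymm
      · intro g hg
        obtain ⟨r, hr, hballU⟩ := Metric.isOpen_iff.1 hUopen g hg
        obtain ⟨a, ha⟩ := (TopologicalSpace.denseRange_denseSeq Cstar).exists_dist_lt g
          (show (0:ℝ) < r/3 by linarith)
        obtain ⟨q, hq1, hq2⟩ := exists_rat_btwn (show r/3 < r/2 by linarith)
        have hq0 : (0:ℚ) < q := by
          have : (0:ℝ) < q := lt_trans (by linarith) hq1
          exact_mod_cast this
        have hsub : Metric.closedBall (sq a) (q:ℝ) ⊆ U := by
          intro y hy
          apply hballU
          rw [Metric.mem_ball]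
          have h1 : dist y (sq a) ≤ (q:ℝ) := Metric.mem_closedBall.1 hy
          have h2 : dist (sq a) g < r/3 := by rw [dist_comm]; exact ha
          have hq2' : (q:ℝ) < r/2 := by exact_mod_cast hq2
          calc dist y g ≤ dist y (sq a) + dist (sq a) g := dist_triangle _ _ _
            _ < r := by linarith
        refine Set.mem_iUnion.2 ⟨⟨(a, q), hq0, hsub⟩, ?_⟩
        rw [Metric.mem_closedBall]
        have hq1' : r/3 < (q:ℝ) := by exact_mod_cast hq1
        linarith
      · intro g hg
        obtain ⟨p, hp⟩ := Set.mem_iUnion.1 hg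
        exact p.2.2 hp
    rw [hrep]
    refine MeasurableSet.iUnion fun p => hball _ _ ?_
    have : (0:ℚ) < p.1.2 := p.2.1
    exact_mod_cast this.le
  · -- E ≤ borel : cylinders are closed
    show E ≤ borel Cstar
    refine MeasurableSpace.generateFrom_le ?_
    rintro s ⟨n, w, c, -, rfl⟩
    have hclosed : IsClosed {f : Cstar | ∀ i, f.1 (w i) ≤ c i} := by
      have hrep : {f : Cstar | ∀ i, f.1 (w i) ≤ c i}
          = ⋂ i, (fun f : Cstar => f.1 (w i)) ⁻¹' Set.Iic (c i) := by
        ext f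
        simp [Set.mem_iInter]
      rw [hrep]
      exact isClosed_iInter fun i =>
        IsClosed.preimage (continuous_ev (w i)) isClosed_Iic
    have h1 : MeasurableSet[borel Cstar] {f : Cstar | ∀ i, f.1 (w i) ≤ c i}ᶜ :=
      MeasurableSpace.measurableSet_generateFrom hclosed.isOpen_compl
    simpa using h1.compl

end CstarAux

end

open CstarAux in
/-- If two finite nonnegative Borel measures `μ₁, μ₂` on `C*` give the same integral to
every "duality moment" `f ↦ (∏ᵢ (1−f(xᵢ)))·(1 − ∏ⱼ (1−f(yⱼ)))`, for all `n, m ≥ 1` and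
all points `x₁,…,xₙ, y₁,…,y_m` of the circle, then `μ₁ = μ₂`. -/
theorem stmt_7 (μ₁ μ₂ : Measure Cstar) [IsFiniteMeasure μ₁] [IsFiniteMeasure μ₂]
    (h : ∀ (n m : ℕ), 0 < n → 0 < m →
      ∀ (x : Fin n → AddCircle (1:ℝ)) (y : Fin m → AddCircle (1:ℝ)),
      (∫ f : Cstar, (∏ i, (1 - f.1 (x i))) * (1 - ∏ j, (1 - f.1 (y j))) ∂μ₁)
        = ∫ f : Cstar, (∏ i, (1 - f.1 (x i))) * (1 - ∏ j, (1 - f.1 (y j))) ∂μ₂) :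
    μ₁ = μ₂ := by
  have hm : ∀ {k : ℕ}, 0 < k → ∀ x : Fin k → AddCircle (1:ℝ),
      ∫ f : Cstar, ∏ j, (1 - f.1 (x j)) ∂μ₁ = ∫ f : Cstar, ∏ j, (1 - f.1 (x j)) ∂μ₂ :=
    fun hk x => moments μ₁ μ₂ h hk x
  -- total mass
  have huniv : μ₁ Set.univ = μ₂ Set.univ := by
    set B : ℕ → Set Cstar := fun m =>
      T (fun j : Fin m => v (j : ℕ)) ⁻¹' {z : Xn m | ∃ j, (z j : ℝ) ≤ 1 - 1/(m+1)} with hB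
    have hBF : ∀ m, IsClosed {z : Xn m | ∃ j, (z j : ℝ) ≤ 1 - 1/(m+1)} := by
      intro m
      have hrep : {z : Xn m | ∃ j, (z j : ℝ) ≤ 1 - 1/(m+1)}
          = ⋃ j, (coordFn j) ⁻¹' Set.Iic (1 - 1/(m+1)) := by
        ext z
        simp [coordFn]
      rw [hrep]
      exact isClosed_iUnion_of_finite fun j =>
        IsClosed.preimage (coordFn j).continuous isClosed_Iic
    have hBc : ∀ m, corner m ∉ {z : Xn m | ∃ j, (z j : ℝ) ≤ 1 - 1/(m+1)} := by
      rintro m ⟨j, hj⟩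
      simp only [corner] at hj
      have : (0:ℝ) < 1/(m+1) := by positivity
      norm_num at hj
      linarith
    have hBeq : ∀ m, μ₁ (B m) = μ₂ (B m) := fun m =>
      push_eq μ₁ μ₂ hm _ (hBF m) (hBc m)
    have hmono : Monotone B := by
      intro m m' hmm f hf
      obtain ⟨j, hj⟩ := hf
      refine ⟨⟨j.1, lt_of_lt_of_le j.2 hmm⟩, ?_⟩
      have hstep : 1 - 1/((m:ℝ)+1) ≤ 1 - 1/((m':ℝ)+1) := by
        have h1 : (m:ℝ) + 1 ≤ (m':ℝ) + 1 := by
          have : (m:ℝ) ≤ (m':ℝ) := by exact_mod_cast hmm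
          linarith
        have h2 : 1/((m':ℝ)+1) ≤ 1/((m:ℝ)+1) :=
          one_div_le_one_div_of_le (by positivity) h1
        linarith
      exact le_trans hj hstep
    have hunion : (⋃ m, B m) = Set.univ := by
      ext f
      simp only [Set.mem_iUnion, Set.mem_univ, iff_true]
      obtain ⟨x₀, hx₀0, hx₀1⟩ := f.2.2
      have hr0 : (0:ℝ) < 1 - f.1 x₀ := by linarith
      obtain ⟨m₀, hm₀⟩ := exists_nat_gt (1/(1 - f.1 x₀))
      have hm₀' : 1/((m₀:ℝ)+1) < 1 - f.1 x₀ := by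
        rw [div_lt_iff₀ hr0] at hm₀
        rw [div_lt_iff₀ (by positivity)]
        nlinarith
      have hopen : IsOpen {x : AddCircle (1:ℝ) | f.1 x < 1 - 1/((m₀:ℝ)+1)} :=
        isOpen_lt f.1.continuous continuous_const
      obtain ⟨a, ha⟩ := (TopologicalSpace.denseRange_denseSeq (AddCircle (1:ℝ))).exists_mem_open hopen
        ⟨x₀, by simp only [Set.mem_setOf_eq]; linarith⟩
      set j := Nat.pair a 0 with hj
      have hvj : v j = TopologicalSpace.denseSeq (AddCircle (1:ℝ)) a := by simp [v, hj, Nat.unpair_pair]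
      refine ⟨max (j+1) m₀, ⟨⟨j, lt_of_lt_of_le (Nat.lt_succ_self j) (le_max_left _ _)⟩, ?_⟩⟩
      show f.1 (v j) ≤ 1 - 1/((max (j+1) m₀ : ℕ) + 1)
      have h1 : f.1 (v j) < 1 - 1/((m₀:ℝ)+1) := by rw [hvj]; exact ha
      have h2 : 1 - 1/((m₀:ℝ)+1) ≤ 1 - 1/(((max (j+1) m₀ : ℕ) : ℝ)+1) := by
        have hle : (m₀:ℝ) + 1 ≤ ((max (j+1) m₀ : ℕ) : ℝ) + 1 := by
          have : (m₀:ℕ) ≤ max (j+1) m₀ := le_max_right _ _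
          have : (m₀:ℝ) ≤ ((max (j+1) m₀ : ℕ) : ℝ) := by exact_mod_cast this
          linarith
        have := one_div_le_one_div_of_le (show (0:ℝ) < (m₀:ℝ)+1 by positivity) hle
        linarith
      push_cast
      push_cast at h1 h2
      linarith
    have hlim1 := tendsto_measure_iUnion_atTop (μ := μ₁) hmono
    have hlim2 := tendsto_measure_iUnion_atTop (μ := μ₂) hmono
    rw [hunion] at hlim1 hlim2
    exact tendsto_nhds_unique (hlim1.congr hBeq) hlim2
  refine MeasureTheory.ext_of_generate_finite cylSets borel_eq_generateFrom_cylSets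
    isPiSystem_cylSets ?_ huniv
  intro s hs
  obtain ⟨n, w, c, ⟨i₀, hi₀⟩, rfl⟩ := hs
  have : {f : Cstar | ∀ i, f.1 (w i) ≤ c i}
      = T w ⁻¹' {z : Xn n | ∀ i, (z i : ℝ) ≤ c i} := rfl
  rw [this]
  refine push_eq μ₁ μ₂ hm w ?_ ?_
  · have : {z : Xn n | ∀ i, (z i : ℝ) ≤ c i}
        = ⋂ i, (coordFn i) ⁻¹' Set.Iic (c i) := by
      ext z; simp [coordFn, Set.mem_iInter]
    rw [this]
    exact isClosed_iInter fun i =>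
      IsClosed.preimage ((coordFn i).continuous) isClosed_Iic
  · intro hcmem
    exact absurd (hcmem i₀) (by simp [corner]; linarith)
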